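/- An integer q is properly represented by some binary quadratic form of discriminant D if and only if D is a square modulo 4q. -/
import Mathlib


theorem stmt_17 (q D : ℤ) (hq : q ≠ 0) :
    (∃ A B C x y : ℤ, B ^ 2 - 4 * A * C = D ∧ IsCoprime x y ∧
        A * x ^ 2 + B * x * y + C * y ^ 2 = q) ↔
      ∃ z : ℤ, z ^ 2 ≡ D [ZMOD 4 * q] := by
  constructor
  · rintro ⟨A, B, C, x, y, hD, hxy, hq'⟩
    obtain ⟨u, v, huv⟩ := hxy
    refine ⟨2*A*x*(-v) + B*(x*u + y*(-v)) + 2*C*y*u, Int.ModEq.symm <| Int.modEq_iff_dvd.mpr ⟨A*v^2 - B*v*u + C*u^2, ?_⟩⟩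
    subst hD hq'
    linear_combination ((u*x+v*y+1) * (B^2-4*A*C)) * huv
  · rintro ⟨z, hz⟩
    obtain ⟨c, hc⟩ := Int.modEq_iff_dvd.mp hz
    exact ⟨q, z, -c, 1, 0, by linear_combination -hc, isCoprime_one_left, by ring⟩
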